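/- V(G) = (e^{2ρ} − 2ρe^ρ − 1)/λ² + e^ρ σ² + (1 + γ_s²)(e^ρ/λ²) ∑_{n=3}^∞ (ρⁿ/n!) (b_{n−2} − 2/(1 + γ_s²)), where b_n = 2(n+2) ∫₀^∞ h(v)^{n+1} dv / (α^{n+2}(1 + γ_s²)) for n = 0, 1, 2, …. (This is formula (1.5), Sathe's series representation of the busy period variance.) -/

import Mathlib

open MeasureTheory Real Set Filter

set_option maxHeartbeats 2000000

/-- Formula (1.5), Sathe's series representation of the M/G/∞ busy period variance:
`V(G) = (e^{2ρ} - 2ρe^ρ - 1)/λ² + e^ρ σ² + (1 + γ_s²)(e^ρ/λ²) ∑_{n=3}^∞ (ρⁿ/n!)(b_{n-2} - 2/(1+γ_s²))`,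
where `b_n = 2(n+2) ∫₀^∞ h(v)^{n+1} dv / (α^{n+2}(1+γ_s²))`. -/
theorem mg_infty_busy_period_variance_series
    (G : ℝ → ℝ)
    (hmono : Monotone G)
    (hrc : ∀ v : ℝ, ContinuousWithinAt G (Set.Ici v) v)
    (hneg : ∀ v : ℝ, v < 0 → G v = 0)
    (hlim : Tendsto G atTop (nhds 1))
    (lam α μ₂ ρ σ2 γ2 : ℝ)
    (hlam : 0 < lam)
    (hInt1 : IntegrableOn (fun v => 1 - G v) (Ioi 0))
    (hα : α = ∫ v in Ioi (0:ℝ), (1 - G v))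
    (hαpos : 0 < α)
    (hInt2 : IntegrableOn (fun v => v * (1 - G v)) (Ioi 0))
    (hμ₂ : μ₂ = 2 * ∫ v in Ioi (0:ℝ), v * (1 - G v))
    (hρ : ρ = lam * α)
    (hσ : σ2 = μ₂ - α ^ 2)
    (hγ : γ2 = σ2 / α ^ 2)
    (h : ℝ → ℝ)
    (hh : ∀ t : ℝ, h t = ∫ v in Ioi t, (1 - G v))
    (b : ℕ → ℝ)
    (hb : ∀ n : ℕ, b n =
      2 * (n + 2) * (∫ v in Ioi (0:ℝ), (h v) ^ (n + 1)) / (α ^ (n + 2) * (1 + γ2))) :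
    (2 * exp ρ / lam) * (∫ t in Ioi (0:ℝ), (exp (lam * h t) - 1)) - ((exp ρ - 1) / lam) ^ 2
      = (exp (2 * ρ) - 2 * ρ * exp ρ - 1) / lam ^ 2 + exp ρ * σ2
        + (1 + γ2) * (exp ρ / lam ^ 2)
          * ∑' n : ℕ, (ρ ^ (n + 3) / (Nat.factorial (n + 3)))
              * (b (n + 1) - 2 / (1 + γ2)) := by
  have hαne : α ≠ 0 := ne_of_gt hαpos
  have hlamne : lam ≠ 0 := ne_of_gt hlam
  -- basic properties of G and F := 1 - G
  have Gmeas : Measurable G := hmono.measurable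
  have hG1 : ∀ v, G v ≤ 1 := fun v => hmono.ge_of_tendsto hlim v
  have hG0 : ∀ v, 0 ≤ G v := by
    intro v
    rcases lt_or_ge v 0 with hv | hv
    · exact (hneg v hv).ge
    · calc (0:ℝ) = G (-1) := (hneg (-1) (by norm_num)).symm
        _ ≤ G v := hmono (by linarith)
  have hF0 : ∀ v, 0 ≤ 1 - G v := fun v => by linarith [hG1 v]
  have hFmeas : Measurable (fun v : ℝ => 1 - G v) := measurable_const.sub Gmeas
  have hIntF : ∀ t : ℝ, 0 ≤ t → IntegrableOn (fun v => 1 - G v) (Ioi t) :=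
    fun t ht => hInt1.mono_set (Ioi_subset_Ioi ht)
  -- properties of h
  have hh0 : ∀ t : ℝ, 0 ≤ t → 0 ≤ h t := by
    intro t ht
    rw [hh]
    exact setIntegral_nonneg measurableSet_Ioi fun v _ => hF0 v
  have h_anti : ∀ s t : ℝ, 0 ≤ s → s ≤ t → h t ≤ h s := by
    intro s t hs hst
    rw [hh, hh]
    exact setIntegral_mono_set (hIntF s hs) (ae_of_all _ fun v => hF0 v)
      (HasSubset.Subset.eventuallyLE (Ioi_subset_Ioi hst))
  have h0α : h 0 = α := by rw [hh, hα]
  have hhle : ∀ t : ℝ, 0 < t → h t ≤ α := fun t ht => h0α ▸ h_anti 0 t le_rfl ht.le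
  -- a.e.-measurability of h on Ioi 0
  have Hanti : Antitone (fun t : ℝ => h (max t 0)) := by
    intro s t hst
    exact h_anti (max s 0) (max t 0) (le_max_right s 0) (max_le_max hst le_rfl)
  have hae_h : h =ᵐ[volume.restrict (Ioi (0:ℝ))] (fun t => h (max t 0)) := by
    filter_upwards [ae_restrict_mem measurableSet_Ioi] with t ht
    rw [max_eq_left (le_of_lt ht)]
  have hmeas_h : AEMeasurable h (volume.restrict (Ioi (0:ℝ))) :=
    ⟨fun t => h (max t 0), Hanti.measurable, hae_h⟩
  -- Tonelli: ∫⁻ ofReal (h t) over Ioi 0 equals ∫⁻ ofReal (v * F v)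
  set K : ℝ → ℝ → ENNReal := fun t v => if t < v then ENNReal.ofReal (1 - G v) else 0 with hK
  have hKmeas : Measurable (Function.uncurry K) := by
    apply Measurable.ite (measurableSet_lt measurable_fst measurable_snd)
    · exact ENNReal.measurable_ofReal.comp (hFmeas.comp measurable_snd)
    · exact measurable_const
  have step1 : ∀ t ∈ Ioi (0:ℝ),
      (∫⁻ v in Ioi (0:ℝ), K t v) = ENNReal.ofReal (h t) := by
    intro t ht
    have e1 : (∫⁻ v in Ioi (0:ℝ), K t v)
        = ∫⁻ v in Ioi (0:ℝ), (Ioi t).indicator (fun v => ENNReal.ofReal (1 - G v)) v := by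
      apply lintegral_congr fun v => ?_
      simp [hK, Set.indicator_apply, mem_Ioi]
    rw [e1, lintegral_indicator measurableSet_Ioi, Measure.restrict_restrict measurableSet_Ioi,
      Set.inter_eq_self_of_subset_left (Ioi_subset_Ioi (le_of_lt ht)), hh]
    exact (ofReal_integral_eq_lintegral_ofReal (hIntF t (le_of_lt ht))
      (ae_of_all _ fun v => hF0 v)).symm
  have step2 : ∀ v ∈ Ioi (0:ℝ),
      (∫⁻ t in Ioi (0:ℝ), K t v) = ENNReal.ofReal (v * (1 - G v)) := by
    intro v hv
    have e1 : (∫⁻ t in Ioi (0:ℝ), K t v)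
        = ∫⁻ t in Ioi (0:ℝ), (Iio v).indicator (fun _ => ENNReal.ofReal (1 - G v)) t := by
      apply lintegral_congr fun t => ?_
      simp [hK, Set.indicator_apply, mem_Iio]
    rw [e1, lintegral_indicator measurableSet_Iio, Measure.restrict_restrict measurableSet_Iio,
      setLIntegral_const]
    rw [Set.Iio_inter_Ioi, Real.volume_Ioo, ← ENNReal.ofReal_mul (hF0 v)]
    rw [sub_zero, mul_comm]
  have hLh : (∫⁻ t in Ioi (0:ℝ), ENNReal.ofReal (h t))
      = ENNReal.ofReal (∫ v in Ioi (0:ℝ), v * (1 - G v)) := by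
    have swap : (∫⁻ t in Ioi (0:ℝ), ∫⁻ v in Ioi (0:ℝ), K t v)
        = ∫⁻ v in Ioi (0:ℝ), ∫⁻ t in Ioi (0:ℝ), K t v :=
      lintegral_lintegral_swap hKmeas.aemeasurable
    calc (∫⁻ t in Ioi (0:ℝ), ENNReal.ofReal (h t))
        = ∫⁻ t in Ioi (0:ℝ), ∫⁻ v in Ioi (0:ℝ), K t v := by
          refine setLIntegral_congr_fun measurableSet_Ioi (fun t ht => ?_)
          exact (step1 t ht).symm
      _ = ∫⁻ v in Ioi (0:ℝ), ∫⁻ t in Ioi (0:ℝ), K t v := swap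
      _ = ∫⁻ v in Ioi (0:ℝ), ENNReal.ofReal (v * (1 - G v)) := by
          exact setLIntegral_congr_fun measurableSet_Ioi (fun v hv => step2 v hv)
      _ = ENNReal.ofReal (∫ v in Ioi (0:ℝ), v * (1 - G v)) := by
          refine (ofReal_integral_eq_lintegral_ofReal hInt2 ?_).symm
          filter_upwards [ae_restrict_mem measurableSet_Ioi] with v hv
          exact mul_nonneg (le_of_lt hv) (hF0 v)
  have hInt_h : IntegrableOn h (Ioi (0:ℝ)) := by
    refine ⟨hmeas_h.aestronglyMeasurable, ?_⟩
    rw [hasFiniteIntegral_iff_ofReal ?_]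
    · rw [hLh]; exact ENNReal.ofReal_lt_top
    · filter_upwards [ae_restrict_mem measurableSet_Ioi] with t ht
      exact hh0 t (le_of_lt ht)
  have hI1 : (∫ t in Ioi (0:ℝ), h t) = μ₂ / 2 := by
    have e1 : ENNReal.ofReal (∫ t in Ioi (0:ℝ), h t)
        = ENNReal.ofReal (∫ v in Ioi (0:ℝ), v * (1 - G v)) := by
      rw [← hLh]
      refine ofReal_integral_eq_lintegral_ofReal hInt_h ?_
      filter_upwards [ae_restrict_mem measurableSet_Ioi] with t ht
      exact hh0 t (le_of_lt ht)
    have h2 : (∫ t in Ioi (0:ℝ), h t) = ∫ v in Ioi (0:ℝ), v * (1 - G v) := by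
      have hn1 : (0:ℝ) ≤ ∫ t in Ioi (0:ℝ), h t :=
        setIntegral_nonneg measurableSet_Ioi fun t ht => hh0 t (le_of_lt ht)
      have hn2 : (0:ℝ) ≤ ∫ v in Ioi (0:ℝ), v * (1 - G v) :=
        setIntegral_nonneg measurableSet_Ioi fun v hv => mul_nonneg (le_of_lt hv) (hF0 v)
      exact (ENNReal.ofReal_eq_ofReal_iff hn1 hn2).1 e1
    rw [h2, hμ₂]; ring
  -- integrability of powers of h
  have hIntPow : ∀ k : ℕ, IntegrableOn (fun t => h t ^ (k+1)) (Ioi (0:ℝ)) := by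
    intro k
    refine Integrable.mono' (hInt_h.const_mul (α ^ k))
      ((hmeas_h.pow_const (k+1)).aestronglyMeasurable) ?_
    filter_upwards [ae_restrict_mem measurableSet_Ioi] with t ht
    have h0 := hh0 t (le_of_lt ht)
    have hle := hhle t ht
    rw [Real.norm_eq_abs, abs_of_nonneg (pow_nonneg h0 _)]
    calc h t ^ (k+1) = h t ^ k * h t := by ring
      _ ≤ α ^ k * h t := mul_le_mul_of_nonneg_right (pow_le_pow_left₀ h0 hle k) h0
  -- the integrals I (n+1) and their bounds
  set I : ℕ → ℝ := fun m => ∫ t in Ioi (0:ℝ), h t ^ m with hIdef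
  have hInonneg : ∀ m : ℕ, 0 ≤ I m := by
    intro m
    exact setIntegral_nonneg measurableSet_Ioi fun t ht => pow_nonneg (hh0 t (le_of_lt ht)) m
  have hIbound : ∀ k : ℕ, I (k+1) ≤ α ^ k * (μ₂ / 2) := by
    intro k
    have : I (k+1) ≤ ∫ t in Ioi (0:ℝ), α ^ k * h t := by
      refine setIntegral_mono_on (hIntPow k) (hInt_h.const_mul (α ^ k)) measurableSet_Ioi ?_
      intro t ht
      have h0 := hh0 t (le_of_lt ht)
      calc h t ^ (k+1) = h t ^ k * h t := by ring
        _ ≤ α ^ k * h t := mul_le_mul_of_nonneg_right (pow_le_pow_left₀ h0 (hhle t ht) k) h0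
    calc I (k+1) ≤ ∫ t in Ioi (0:ℝ), α ^ k * h t := this
      _ = α ^ k * (μ₂ / 2) := by rw [integral_const_mul, hI1]
  have hI1' : I 1 = μ₂ / 2 := by
    rw [hIdef]
    simpa using hI1
  -- summability of the main series
  set a : ℕ → ℝ := fun n => lam ^ (n+1) / ((n+1).factorial : ℝ) * I (n+1) with hadef
  have hanonneg : ∀ n, 0 ≤ a n := by
    intro n
    exact mul_nonneg (div_nonneg (pow_nonneg hlam.le _) (Nat.cast_nonneg _)) (hInonneg _)
  have habound : ∀ n : ℕ, a n ≤ (μ₂ / 2 / α) * (ρ ^ (n+1) / ((n+1).factorial : ℝ)) := by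
    intro n
    have hfact : (0:ℝ) < ((n+1).factorial : ℝ) := by positivity
    calc a n ≤ lam ^ (n+1) / ((n+1).factorial : ℝ) * (α ^ n * (μ₂ / 2)) := by
          refine mul_le_mul_of_nonneg_left (hIbound n) ?_
          positivity
      _ = (μ₂ / 2 / α) * (ρ ^ (n+1) / ((n+1).factorial : ℝ)) := by
          rw [hρ, mul_pow]
          field_simp
          ring
  have hsum_exp : Summable (fun n : ℕ => ρ ^ n / (n.factorial : ℝ)) :=
    Real.summable_pow_div_factorial ρ
  have hsum_g : Summable (fun n : ℕ => (μ₂ / 2 / α) * (ρ ^ (n+1) / ((n+1).factorial : ℝ))) :=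
    ((summable_nat_add_iff 1).2 hsum_exp).mul_left _
  have hsumA : Summable a := Summable.of_nonneg_of_le hanonneg habound hsum_g
  -- the integral of exp (lam * h t) - 1 equals the sum S
  set S : ℝ := ∑' n : ℕ, a n with hSdef
  have hexp_tsum : ∀ x : ℝ, exp x - 1 = ∑' n : ℕ, x ^ (n+1) / ((n+1).factorial : ℝ) := by
    intro x
    have hs : Summable (fun n : ℕ => x ^ n / (n.factorial : ℝ)) :=
      Real.summable_pow_div_factorial x
    have he : exp x = ∑' n : ℕ, x ^ n / (n.factorial : ℝ) := by
      rw [Real.exp_eq_exp_ℝ, NormedSpace.exp_eq_tsum_div]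
    rw [he, Summable.tsum_eq_zero_add hs]
    norm_num
  have hmain : (∫ t in Ioi (0:ℝ), (exp (lam * h t) - 1)) = S := by
    have e0 : (∫ t in Ioi (0:ℝ), (exp (lam * h t) - 1))
        = ∫ t in Ioi (0:ℝ), ∑' n : ℕ, (lam * h t) ^ (n+1) / ((n+1).factorial : ℝ) := by
      exact integral_congr_ae (ae_of_all _ fun t => hexp_tsum (lam * h t))
    have hfm : ∀ n : ℕ, AEStronglyMeasurable
        (fun t => (lam * h t) ^ (n+1) / ((n+1).factorial : ℝ))
        (volume.restrict (Ioi (0:ℝ))) := by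
      intro n
      exact (((hmeas_h.const_mul lam).pow_const (n+1)).div_const _).aestronglyMeasurable
    have hbnd : ∀ n : ℕ, (∫⁻ t in Ioi (0:ℝ),
        ‖(lam * h t) ^ (n+1) / ((n+1).factorial : ℝ)‖₊)
        ≤ ENNReal.ofReal (lam ^ (n+1) * α ^ n / ((n+1).factorial : ℝ))
          * ENNReal.ofReal (μ₂ / 2) := by
      intro n
      have hcn : (0:ℝ) ≤ lam ^ (n+1) * α ^ n / ((n+1).factorial : ℝ) := by positivity
      have step : (∫⁻ t in Ioi (0:ℝ), ‖(lam * h t) ^ (n+1) / ((n+1).factorial : ℝ)‖₊)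
          ≤ ∫⁻ t in Ioi (0:ℝ),
            ENNReal.ofReal (lam ^ (n+1) * α ^ n / ((n+1).factorial : ℝ)) *
              ENNReal.ofReal (h t) := by
        refine lintegral_mono_ae ?_
        filter_upwards [ae_restrict_mem measurableSet_Ioi] with t ht
        have h0 := hh0 t (le_of_lt ht)
        have hle := hhle t ht
        have hfn : (0:ℝ) ≤ (lam * h t) ^ (n+1) / ((n+1).factorial : ℝ) := by positivity
        rw [← enorm_eq_nnnorm, Real.enorm_eq_ofReal hfn, ← ENNReal.ofReal_mul hcn]
        apply ENNReal.ofReal_le_ofReal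
        have hfact : (0:ℝ) < ((n+1).factorial : ℝ) := by positivity
        calc (lam * h t) ^ (n+1) / ((n+1).factorial : ℝ)
            = lam ^ (n+1) * h t ^ (n+1) / ((n+1).factorial : ℝ) := by rw [mul_pow]
          _ ≤ lam ^ (n+1) * (α ^ n * h t) / ((n+1).factorial : ℝ) := by
              gcongr
              calc h t ^ (n+1) = h t ^ n * h t := by ring
                _ ≤ α ^ n * h t := mul_le_mul_of_nonneg_right (pow_le_pow_left₀ h0 hle n) h0
          _ = lam ^ (n+1) * α ^ n / ((n+1).factorial : ℝ) * h t := by ring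
      calc (∫⁻ t in Ioi (0:ℝ), ‖(lam * h t) ^ (n+1) / ((n+1).factorial : ℝ)‖₊)
          ≤ ∫⁻ t in Ioi (0:ℝ),
            ENNReal.ofReal (lam ^ (n+1) * α ^ n / ((n+1).factorial : ℝ)) *
              ENNReal.ofReal (h t) := step
        _ = ENNReal.ofReal (lam ^ (n+1) * α ^ n / ((n+1).factorial : ℝ))
            * ∫⁻ t in Ioi (0:ℝ), ENNReal.ofReal (h t) := lintegral_const_mul' _ _ ENNReal.ofReal_ne_top
        _ = ENNReal.ofReal (lam ^ (n+1) * α ^ n / ((n+1).factorial : ℝ))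
            * ENNReal.ofReal (μ₂ / 2) := by
              have e2 : (∫ v in Ioi (0:ℝ), v * (1 - G v)) = μ₂ / 2 := by rw [hμ₂]; ring
              rw [hLh, e2]
    have hsum_c : Summable (fun n : ℕ => lam ^ (n+1) * α ^ n / ((n+1).factorial : ℝ)) := by
      have e3 : (fun n : ℕ => lam ^ (n+1) * α ^ n / ((n+1).factorial : ℝ))
          = fun n : ℕ => (1/α) * (ρ ^ (n+1) / ((n+1).factorial : ℝ)) := by
        funext n
        rw [hρ, mul_pow]
        field_simp
        ring
      rw [e3]
      exact ((summable_nat_add_iff 1).2 hsum_exp).mul_left _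
    have hne : (∑' n : ℕ, ∫⁻ t in Ioi (0:ℝ),
        ‖(lam * h t) ^ (n+1) / ((n+1).factorial : ℝ)‖₊) ≠ ⊤ := by
      refine ne_top_of_le_ne_top ?_ (ENNReal.tsum_le_tsum hbnd)
      rw [ENNReal.tsum_mul_right,
        ← ENNReal.ofReal_tsum_of_nonneg (fun n => by positivity) hsum_c]
      exact ENNReal.mul_ne_top ENNReal.ofReal_ne_top ENNReal.ofReal_ne_top
    rw [e0, integral_tsum hfm hne]
    refine tsum_congr fun n => ?_
    calc (∫ t in Ioi (0:ℝ), (lam * h t) ^ (n+1) / ((n+1).factorial : ℝ))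
        = ∫ t in Ioi (0:ℝ), (lam ^ (n+1) / ((n+1).factorial : ℝ)) * h t ^ (n+1) := by
          refine integral_congr_ae (ae_of_all _ fun t => ?_)
          simp only [mul_pow]
          ring
      _ = a n := by rw [integral_const_mul]
  -- positivity of 1 + γ2
  have hvFpos : 0 < ∫ v in Ioi (0:ℝ), v * (1 - G v) := by
    rcases (setIntegral_nonneg measurableSet_Ioi
      (fun v hv => mul_nonneg (le_of_lt hv) (hF0 v))).lt_or_eq with hlt | heq
    · exact hlt
    · exfalso
      have hz : (fun v => v * (1 - G v)) =ᵐ[volume.restrict (Ioi (0:ℝ))] 0 := by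
        refine (integral_eq_zero_iff_of_nonneg_ae ?_ hInt2).1 heq.symm
        filter_upwards [ae_restrict_mem measurableSet_Ioi] with v hv
        exact mul_nonneg (le_of_lt hv) (hF0 v)
      have hFz : (fun v => 1 - G v) =ᵐ[volume.restrict (Ioi (0:ℝ))] 0 := by
        filter_upwards [hz, ae_restrict_mem measurableSet_Ioi] with v hv1 hv2
        have : v * (1 - G v) = 0 := hv1
        have := mul_eq_zero.1 this
        rcases this with h1 | h2
        · exact absurd h1 (ne_of_gt hv2)
        · exact h2
      have : α = 0 := by
        rw [hα, integral_congr_ae hFz]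
        simp
      exact hαne this
  have hμpos : 0 < μ₂ := by rw [hμ₂]; linarith
  have h1γ : 1 + γ2 = μ₂ / α ^ 2 := by
    rw [hγ, hσ]
    field_simp
    ring
  have h1γne : 1 + γ2 ≠ 0 := by
    rw [h1γ]
    positivity
  -- per-term identity for the series on the right-hand side
  have hT : ∀ n : ℕ, (ρ ^ (n + 3) / ((n+3).factorial : ℝ)) * (b (n + 1) - 2 / (1 + γ2))
      = (1/(1+γ2)) * (2 * lam * a (n+1) - 2 * (ρ ^ (n+3) / ((n+3).factorial : ℝ))) := by
    intro n
    have hInt_eq : (∫ v in Ioi (0:ℝ), h v ^ (n+1+1)) = I (n+2) := rfl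
    have hfs : ((n+3).factorial : ℝ) = ((n:ℝ)+3) * ((n+2).factorial : ℝ) := by
      rw [show n+3 = (n+2)+1 from rfl, Nat.factorial_succ]
      push_cast
      ring
    have hf2 : ((n+2).factorial : ℝ) ≠ 0 := by positivity
    have han : a (n+1) = lam ^ (n+2) / ((n+2).factorial : ℝ) * I (n+2) := rfl
    rw [hb (n+1), hInt_eq, hρ, han, hfs]
    push_cast
    field_simp
    ring
  -- summation identities
  have hsumA1 : Summable (fun n : ℕ => a (n+1)) := (summable_nat_add_iff 1).2 hsumA
  have hsumE : Summable (fun n : ℕ => ρ ^ (n+3) / ((n+3).factorial : ℝ)) :=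
    (summable_nat_add_iff 3).2 hsum_exp
  have hshift : ∑' n : ℕ, a (n+1) = S - a 0 := by
    have e := Summable.tsum_eq_zero_add hsumA
    rw [hSdef]
    linarith [e]
  have ha0 : a 0 = lam * (μ₂ / 2) := by
    have : a 0 = lam ^ 1 / ((1).factorial : ℝ) * I 1 := rfl
    rw [this, hI1']
    norm_num
  have hEsum : ∑' n : ℕ, ρ ^ (n+3) / ((n+3).factorial : ℝ) = exp ρ - 1 - ρ - ρ^2/2 := by
    have he : exp ρ = ∑' n : ℕ, ρ ^ n / (n.factorial : ℝ) := by
      rw [Real.exp_eq_exp_ℝ, NormedSpace.exp_eq_tsum_div]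
    have h1 : Summable (fun n : ℕ => ρ ^ (n+1) / ((n+1).factorial : ℝ)) :=
      (summable_nat_add_iff 1).2 hsum_exp
    have h2 : Summable (fun n : ℕ => ρ ^ (n+2) / ((n+2).factorial : ℝ)) :=
      (summable_nat_add_iff 2).2 hsum_exp
    have e1 := Summable.tsum_eq_zero_add hsum_exp
    have e2 := Summable.tsum_eq_zero_add h1
    have e3 := Summable.tsum_eq_zero_add h2
    rw [he, e1, e2, e3]
    norm_num [Nat.factorial]
  -- compute the right-hand side series
  have htsum : (∑' n : ℕ, (ρ ^ (n + 3) / ((n+3).factorial : ℝ)) * (b (n + 1) - 2 / (1 + γ2)))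
      = (1/(1+γ2)) * (2 * lam * (S - lam * (μ₂/2)) - 2 * (exp ρ - 1 - ρ - ρ^2/2)) := by
    calc (∑' n : ℕ, (ρ ^ (n + 3) / ((n+3).factorial : ℝ)) * (b (n + 1) - 2 / (1 + γ2)))
        = ∑' n : ℕ, (1/(1+γ2)) *
            (2 * lam * a (n+1) - 2 * (ρ ^ (n+3) / ((n+3).factorial : ℝ))) :=
          tsum_congr hT
      _ = (1/(1+γ2)) * ∑' n : ℕ,
            (2 * lam * a (n+1) - 2 * (ρ ^ (n+3) / ((n+3).factorial : ℝ))) := tsum_mul_left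
      _ = (1/(1+γ2)) * (2 * lam * (S - lam * (μ₂/2)) - 2 * (exp ρ - 1 - ρ - ρ^2/2)) := by
          rw [Summable.tsum_sub (hsumA1.mul_left (2 * lam)) (hsumE.mul_left 2),
            tsum_mul_left, tsum_mul_left, hshift, hEsum, ha0]
  -- final algebraic assembly
  rw [hmain, htsum, hσ]
  have hexp2 : exp (2 * ρ) = exp ρ * exp ρ := by rw [two_mul, exp_add]
  rw [hexp2]
  have hμα : μ₂ = α ^ 2 * (1 + γ2) := by
    rw [h1γ]
    field_simp
  subst hρ
  field_simp
  ring
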